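/- Let f_X and f_Y be strictly positive probability density functions on ℝ and let ε > 0. Then the smallest δ ∈ [0,1] such that for every measurable set S ⊆ ℝ both ∫_S f_X(t) dt ≤ e^ε ∫_S f_Y(t) dt + δ and ∫_S f_Y(t) dt ≤ e^ε ∫_S f_X(t) dt + δ hold is exactly δ(ε) = max{ ∫_ℝ max{f_X(t) − e^ε f_Y(t), 0} dt , ∫_ℝ max{f_Y(t) − e^ε f_X(t), 0} dt }. In particular, this δ(ε) satisfies both families of inequalities, and for δ' < δ(ε) at least one inequality fails for some measurable S. -/
import Mathlib

open MeasureTheory Real Set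

lemma dp_pospart_int {f g : ℝ → ℝ} (hfi : Integrable f) (hgi : Integrable g) (c : ℝ) :
    Integrable (fun t => max (f t - c * g t) 0) :=
  (hfi.sub (hgi.const_mul c)).pos_part

lemma dp_pospart_eq {f g : ℝ → ℝ} (hfm : Measurable f) (hgm : Measurable g)
    (hfi : Integrable f) (hgi : Integrable g) (c : ℝ) :
    (∫ t, max (f t - c * g t) 0) = ∫ t in {t | c * g t < f t}, (f t - c * g t) := by
  have hS : MeasurableSet {t | c * g t < f t} := measurableSet_lt (hgm.const_mul c) hfm
  have hi := dp_pospart_int hfi hgi c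
  rw [← integral_add_compl hS hi]
  have h1 : (∫ t in {t | c * g t < f t}, max (f t - c * g t) 0)
      = ∫ t in {t | c * g t < f t}, (f t - c * g t) := by
    apply setIntegral_congr_fun hS
    intro t ht
    simp only [mem_setOf_eq] at ht
    simp [max_eq_left (by linarith : (0:ℝ) ≤ f t - c * g t)]
  have h2 : (∫ t in {t | c * g t < f t}ᶜ, max (f t - c * g t) 0) = 0 := by
    rw [setIntegral_congr_fun hS.compl (g := fun _ => (0:ℝ))]
    · simp
    · intro t ht
      simp only [mem_compl_iff, mem_setOf_eq, not_lt] at ht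
      simp [max_eq_right (by linarith : f t - c * g t ≤ 0)]
  rw [h1, h2, add_zero]

-- upper: for all measurable S, ∫_S f ≤ c ∫_S g + ∫ maxpart
lemma dp_upper {f g : ℝ → ℝ} (hfm : Measurable f) (hgm : Measurable g)
    (hfi : Integrable f) (hgi : Integrable g) (c : ℝ)
    {S : Set ℝ} (hS : MeasurableSet S) :
    (∫ t in S, f t) ≤ c * (∫ t in S, g t) + ∫ t, max (f t - c * g t) 0 := by
  have hi := dp_pospart_int hfi hgi c
  have h1 : (∫ t in S, f t) - c * (∫ t in S, g t) = ∫ t in S, (f t - c * g t) := by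
    rw [integral_sub hfi.integrableOn ((hgi.const_mul c).integrableOn), integral_const_mul]
  have h2 : (∫ t in S, (f t - c * g t)) ≤ ∫ t in S, max (f t - c * g t) 0 :=
    setIntegral_mono_on (hfi.sub (hgi.const_mul c)).integrableOn hi.integrableOn hS
      (fun t _ => le_max_left _ _)
  have h3 : (∫ t in S, max (f t - c * g t) 0) ≤ ∫ t, max (f t - c * g t) 0 :=
    setIntegral_le_integral hi (Filter.Eventually.of_forall fun t => le_max_right _ _)
  linarith

-- lower: any valid δ dominates ∫ maxpart
lemma dp_lower {f g : ℝ → ℝ} (hfm : Measurable f) (hgm : Measurable g)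
    (hfi : Integrable f) (hgi : Integrable g) (c δ : ℝ)
    (h : ∀ S : Set ℝ, MeasurableSet S → (∫ t in S, f t) ≤ c * (∫ t in S, g t) + δ) :
    (∫ t, max (f t - c * g t) 0) ≤ δ := by
  have hS : MeasurableSet {t | c * g t < f t} := measurableSet_lt (hgm.const_mul c) hfm
  have := h _ hS
  rw [dp_pospart_eq hfm hgm hfi hgi c,
    integral_sub hfi.integrableOn ((hgi.const_mul c).integrableOn), integral_const_mul]
  linarith

theorem tight_delta_eps
    (fX fY : ℝ → ℝ)
    (hfXm : Measurable fX) (hfYm : Measurable fY)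
    (hfXpos : ∀ t, 0 < fX t) (hfYpos : ∀ t, 0 < fY t)
    (hfXi : Integrable fX) (hfYi : Integrable fY)
    (hfX1 : (∫ t, fX t) = 1) (hfY1 : (∫ t, fY t) = 1)
    (ε : ℝ) (hε : 0 < ε) :
    IsLeast
      {δ : ℝ | δ ∈ Set.Icc (0 : ℝ) 1 ∧ ∀ S : Set ℝ, MeasurableSet S →
        (∫ t in S, fX t) ≤ Real.exp ε * (∫ t in S, fY t) + δ ∧
        (∫ t in S, fY t) ≤ Real.exp ε * (∫ t in S, fX t) + δ}
      (max (∫ t, max (fX t - Real.exp ε * fY t) 0)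
           (∫ t, max (fY t - Real.exp ε * fX t) 0)) := by
  set c := Real.exp ε with hc
  have hcpos : 0 < c := Real.exp_pos ε
  set A := ∫ t, max (fX t - c * fY t) 0 with hA
  set B := ∫ t, max (fY t - c * fX t) 0 with hB
  have hA0 : 0 ≤ A := integral_nonneg fun t => le_max_right _ _
  have hB0 : 0 ≤ B := integral_nonneg fun t => le_max_right _ _
  have hA1 : A ≤ 1 := by
    rw [← hfX1]
    exact integral_mono (dp_pospart_int hfXi hfYi c) hfXi
      (fun t => max_le (by nlinarith [(hfYpos t)]) (hfXpos t).le)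
  have hB1 : B ≤ 1 := by
    rw [← hfY1]
    exact integral_mono (dp_pospart_int hfYi hfXi c) hfYi
      (fun t => max_le (by nlinarith [(hfXpos t)]) (hfYpos t).le)
  constructor
  · refine ⟨⟨le_max_iff.mpr (Or.inl hA0), max_le hA1 hB1⟩, fun S hS => ⟨?_, ?_⟩⟩
    · calc (∫ t in S, fX t) ≤ c * (∫ t in S, fY t) + A :=
            dp_upper hfXm hfYm hfXi hfYi c hS
        _ ≤ c * (∫ t in S, fY t) + max A B := by gcongr; exact le_max_left _ _
    · calc (∫ t in S, fY t) ≤ c * (∫ t in S, fX t) + B :=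
            dp_upper hfYm hfXm hfYi hfXi c hS
        _ ≤ c * (∫ t in S, fX t) + max A B := by gcongr; exact le_max_right _ _
  · rintro δ ⟨-, hδ⟩
    exact max_le
      (dp_lower hfXm hfYm hfXi hfYi c δ (fun S hS => (hδ S hS).1))
      (dp_lower hfYm hfXm hfYi hfXi c δ (fun S hS => (hδ S hS).2))
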